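/- Under the stated hypotheses, the solution component p of the generalized saddle-point problem satisfies the stability estimate ‖p‖_Q ≤ c₂₁ ‖F‖_{V'} + c₂₂ ‖G‖_{Q'}, where c₂₁ = (1/k_b) · (1/(1 − δ)) · (1 + M_a/k_a) and c₂₂ = c₂₁ · M_a/k_b. -/

import Mathlib

/-- Arithmetic combination of the three basic estimates. -/
lemma saddle_aux {Ma Mc ka kb δ f g X Y P : ℝ}
    (hMa : 0 < Ma) (hMc : 0 < Mc) (hka : 0 < ka) (hkb : 0 < kb)
    (hδdef : δ = Ma * (1 + Ma / ka) * Mc / kb ^ 2) (hδ : δ < 1)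
    (hf : 0 ≤ f) (hg : 0 ≤ g) (hX : 0 ≤ X) (hY : 0 ≤ Y) (hP : 0 ≤ P)
    (h1 : kb * P ≤ f + Ma * (X + Y)) (h2 : ka * Y ≤ f + Ma * X)
    (h3 : kb * X ≤ g + Mc * P) :
    P ≤ (1 / kb * (1 / (1 - δ)) * (1 + Ma / ka)) * f
      + (1 / kb * (1 / (1 - δ)) * (1 + Ma / ka) * (Ma / kb)) * g := by
  have hδpos : 0 < 1 - δ := by linarith
  have hs1 := mul_le_mul_of_nonneg_left h1 (mul_pos hka hkb).le
  have hs2 := mul_le_mul_of_nonneg_left h2 (mul_pos hMa hkb).le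
  have hs3 := mul_le_mul_of_nonneg_left h3
    (mul_pos hMa (by linarith : (0:ℝ) < ka + Ma)).le
  have hpoly : (ka * kb ^ 2 - Ma * (ka + Ma) * Mc) * P ≤
      kb * (ka + Ma) * f + Ma * (ka + Ma) * g := by nlinarith [hs1, hs2, hs3]
  have hEq : ka * kb ^ 2 - Ma * (ka + Ma) * Mc = ka * kb ^ 2 * (1 - δ) := by
    rw [hδdef]; field_simp
  have hD : 0 < ka * kb ^ 2 * (1 - δ) := by positivity
  rw [hEq] at hpoly
  have hfin : P ≤ (kb * (ka + Ma) * f + Ma * (ka + Ma) * g) / (ka * kb ^ 2 * (1 - δ)) := by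
    rw [le_div_iff₀ hD]; linarith
  refine hfin.trans (le_of_eq ?_)
  field_simp

/-- Stability estimate for the component `p` of a solution of the generalized
saddle-point problem (Theorem A.1, estimate (A.5b)). -/
theorem saddle_point_stability_p
    {V Q : Type*}
    [NormedAddCommGroup V] [InnerProductSpace ℝ V] [CompleteSpace V]
    [NormedAddCommGroup Q] [InnerProductSpace ℝ Q] [CompleteSpace Q]
    (a : V →ₗ[ℝ] V →ₗ[ℝ] ℝ) (b : V →ₗ[ℝ] Q →ₗ[ℝ] ℝ) (c : Q →ₗ[ℝ] Q →ₗ[ℝ] ℝ)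
    (Ma Mb Mc ka kb δ : ℝ)
    (hMa : 0 < Ma) (hMb : 0 < Mb) (hMc : 0 < Mc)
    (ha : ∀ u v : V, |a u v| ≤ Ma * ‖u‖ * ‖v‖)
    (hb : ∀ (v : V) (q : Q), |b v q| ≤ Mb * ‖v‖ * ‖q‖)
    (hc : ∀ p q : Q, |c p q| ≤ Mc * ‖p‖ * ‖q‖)
    (hka : 0 < ka)
    (hcoer : ∀ u : V, (∀ q : Q, b u q = 0) → ka * ‖u‖ ^ 2 ≤ a u u)
    (hkb : 0 < kb)
    (hinfsup : ∀ q : Q, ∃ v : V, v ≠ 0 ∧ kb * ‖v‖ * ‖q‖ ≤ b v q)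
    (hδdef : δ = Ma * (1 + Ma / ka) * Mc / kb ^ 2)
    (hδ : δ < 1)
    (F : V →L[ℝ] ℝ) (G : Q →L[ℝ] ℝ)
    (u : V) (p : Q)
    (hsol1 : ∀ v : V, a u v + b v p = F v)
    (hsol2 : ∀ q : Q, b u q - c p q = G q) :
    ‖p‖ ≤ (1 / kb * (1 / (1 - δ)) * (1 + Ma / ka)) * ‖F‖
      + (1 / kb * (1 / (1 - δ)) * (1 + Ma / ka) * (Ma / kb)) * ‖G‖ := by
  classical
  -- Continuous bilinear form and the associated operator B : V →L Q
  let bc : V →L[ℝ] Q →L[ℝ] ℝ :=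
    LinearMap.mkContinuous₂ b Mb (by simpa [Real.norm_eq_abs] using hb)
  let B : V →L[ℝ] Q :=
    ((InnerProductSpace.toDual ℝ Q).symm.toContinuousLinearEquiv.toContinuousLinearMap).comp bc
  have hBq : ∀ (v : V) (q : Q), (inner ℝ (B v) q : ℝ) = b v q := by
    intro v q
    simp [B, bc, InnerProductSpace.toDual_symm_apply]
  set T := ContinuousLinearMap.adjoint B with hT
  have hTinner : ∀ (q : Q) (v : V), (inner ℝ (T q) v : ℝ) = b v q := by
    intro q v
    rw [hT, ContinuousLinearMap.adjoint_inner_left, real_inner_comm, hBq]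
  -- lower bound for T
  have hTlow : ∀ q : Q, kb * ‖q‖ ≤ ‖T q‖ := by
    intro q
    obtain ⟨v, hv0, hv⟩ := hinfsup q
    have h1 : (inner ℝ (T q) v : ℝ) ≤ ‖T q‖ * ‖v‖ := real_inner_le_norm _ _
    have h2 : kb * ‖v‖ * ‖q‖ ≤ ‖T q‖ * ‖v‖ := by rw [← hTinner q v] at hv; linarith
    have hvpos : 0 < ‖v‖ := norm_pos_iff.mpr hv0
    exact (mul_le_mul_iff_of_pos_right hvpos).mp (by linarith)
  -- range of T is a closed submodule
  set S := LinearMap.range (T : Q →ₗ[ℝ] V) with hS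
  have hTanti : AntilipschitzWith (⟨kb, hkb.le⟩ : NNReal)⁻¹ T := by
    refine ContinuousLinearMap.antilipschitz_of_bound T ?_
    intro x
    have h' := hTlow x
    show ‖x‖ ≤ kb⁻¹ * ‖T x‖
    calc ‖x‖ = kb⁻¹ * (kb * ‖x‖) := by field_simp
      _ ≤ kb⁻¹ * ‖T x‖ := mul_le_mul_of_nonneg_left h' (by positivity)
  have hSclosed : IsClosed (S : Set V) := by
    have hset : (S : Set V) = Set.range T := by
      ext x; simp [hS, LinearMap.mem_range]
    rw [hset]
    exact hTanti.isClosed_range T.uniformContinuous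
  haveI : CompleteSpace S := hSclosed.completeSpace_coe
  -- orthogonal projection
  set uperp : V := (S.orthogonalProjectionOnto u : V) with huperp
  have humem : u - uperp ∈ Sᗮ := by
    rw [huperp]; exact S.sub_starProjection_mem_orthogonal u
  set u0 : V := u - uperp with hu0
  -- b u0 q = 0 for all q
  have hbu0 : ∀ q : Q, b u0 q = 0 := by
    intro q
    have hmem : T q ∈ S := LinearMap.mem_range_self _ q
    have h := humem (T q) hmem
    rwa [hTinner q u0] at h
  -- norms
  have hX0 : (0:ℝ) ≤ ‖uperp‖ := norm_nonneg _
  have hY0 : (0:ℝ) ≤ ‖u0‖ := norm_nonneg _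
  have hP0 : (0:ℝ) ≤ ‖p‖ := norm_nonneg _
  have hF0 : (0:ℝ) ≤ ‖F‖ := norm_nonneg _
  have hG0 : (0:ℝ) ≤ ‖G‖ := norm_nonneg _
  -- Bound 3 : kb * ‖uperp‖ ≤ ‖G‖ + Mc * ‖p‖
  have h3 : kb * ‖uperp‖ ≤ ‖G‖ + Mc * ‖p‖ := by
    obtain ⟨q0, hq0⟩ := LinearMap.mem_range.mp (SetLike.coe_mem (S.orthogonalProjectionOnto u))
    rw [← huperp, ContinuousLinearMap.coe_coe] at hq0
    have hnorm : b uperp q0 = ‖uperp‖ ^ 2 := by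
      rw [← hTinner q0 uperp, hq0, real_inner_self_eq_norm_sq]
    have hq0n : kb * ‖q0‖ ≤ ‖uperp‖ := by
      have := hTlow q0; rw [hq0] at this; exact this
    have hbdiff : b uperp q0 = b u q0 := by
      have := hbu0 q0
      simp only [hu0, map_sub, LinearMap.sub_apply] at this
      linarith
    have heq : b uperp q0 = G q0 + c p q0 := by
      rw [hbdiff]; have := hsol2 q0; linarith
    have hGb : G q0 ≤ ‖G‖ * ‖q0‖ := by
      calc G q0 ≤ |G q0| := le_abs_self _
        _ ≤ ‖G‖ * ‖q0‖ := by have := G.le_opNorm q0; simpa [Real.norm_eq_abs] using this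
    have hcb : c p q0 ≤ Mc * ‖p‖ * ‖q0‖ := le_trans (le_abs_self _) (hc p q0)
    have hx2 : ‖uperp‖ ^ 2 ≤ (‖G‖ + Mc * ‖p‖) * ‖q0‖ := by
      rw [← hnorm, heq]; linarith
    have hA : kb * ‖uperp‖ ^ 2 ≤ kb * ((‖G‖ + Mc * ‖p‖) * ‖q0‖) :=
      mul_le_mul_of_nonneg_left hx2 hkb.le
    have hB : (‖G‖ + Mc * ‖p‖) * (kb * ‖q0‖) ≤ (‖G‖ + Mc * ‖p‖) * ‖uperp‖ :=
      mul_le_mul_of_nonneg_left hq0n (by positivity)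
    rcases eq_or_lt_of_le hX0 with hXz | hXp
    · rw [← hXz]; simp only [mul_zero]; positivity
    · exact (mul_le_mul_iff_of_pos_right hXp).mp (by linarith [hA, hB])
  -- Bound 2 : ka * ‖u0‖ ≤ ‖F‖ + Ma * ‖uperp‖
  have h2 : ka * ‖u0‖ ≤ ‖F‖ + Ma * ‖uperp‖ := by
    have hcoe := hcoer u0 hbu0
    have hau : a u u0 = F u0 := by
      have h := hsol1 u0
      have h0 := hbu0 p
      rw [h0] at h; linarith
    have hsplit : a u0 u0 = F u0 - a uperp u0 := by
      have hdec : a u u0 = a u0 u0 + a uperp u0 := by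
        rw [hu0]; simp only [map_sub, LinearMap.sub_apply]; ring
      linarith
    have hFb : F u0 ≤ ‖F‖ * ‖u0‖ := by
      calc F u0 ≤ |F u0| := le_abs_self _
        _ ≤ ‖F‖ * ‖u0‖ := by have := F.le_opNorm u0; simpa [Real.norm_eq_abs] using this
    have hab : -a uperp u0 ≤ Ma * ‖uperp‖ * ‖u0‖ := by
      have := (abs_le.mp (ha uperp u0)).1; linarith
    have hY2 : ka * ‖u0‖ ^ 2 ≤ (‖F‖ + Ma * ‖uperp‖) * ‖u0‖ := by
      rw [hsplit] at hcoe; linarith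
    rcases eq_or_lt_of_le hY0 with hYz | hYp
    · rw [← hYz]; simp only [mul_zero]; positivity
    · exact (mul_le_mul_iff_of_pos_right hYp).mp (by linarith [hY2])
  -- Bound 1 : kb * ‖p‖ ≤ ‖F‖ + Ma * (‖uperp‖ + ‖u0‖)
  have h1 : kb * ‖p‖ ≤ ‖F‖ + Ma * (‖uperp‖ + ‖u0‖) := by
    obtain ⟨v, hv0, hv⟩ := hinfsup p
    have hvp : b v p = F v - a u v := by have := hsol1 v; linarith
    have hFb : F v ≤ ‖F‖ * ‖v‖ := by
      calc F v ≤ |F v| := le_abs_self _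
        _ ≤ ‖F‖ * ‖v‖ := by have := F.le_opNorm v; simpa [Real.norm_eq_abs] using this
    have hab : -a u v ≤ Ma * ‖u‖ * ‖v‖ := by
      have := (abs_le.mp (ha u v)).1; linarith
    have huXY : ‖u‖ ≤ ‖uperp‖ + ‖u0‖ := by
      have hrep : u = uperp + u0 := by rw [hu0]; abel
      calc ‖u‖ = ‖uperp + u0‖ := by rw [← hrep]
        _ ≤ ‖uperp‖ + ‖u0‖ := norm_add_le _ _
    have hvpos : 0 < ‖v‖ := norm_pos_iff.mpr hv0
    have key : kb * ‖p‖ * ‖v‖ ≤ (‖F‖ + Ma * (‖uperp‖ + ‖u0‖)) * ‖v‖ := by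
      have h5 : kb * ‖v‖ * ‖p‖ ≤ F v - a u v := by rw [← hvp]; exact hv
      have h6 : Ma * ‖u‖ * ‖v‖ ≤ Ma * (‖uperp‖ + ‖u0‖) * ‖v‖ :=
        mul_le_mul_of_nonneg_right (mul_le_mul_of_nonneg_left huXY hMa.le) hvpos.le
      linarith [h5, hFb, hab, h6]
    exact (mul_le_mul_iff_of_pos_right hvpos).mp key
  exact saddle_aux hMa hMc hka hkb hδdef hδ hF0 hG0 hX0 hY0 hP0 h1 h2 h3
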